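/- Let a₀₀, a₁₀, a₁₁ ∈ ℂ[x₀,x₁,x₂] be homogeneous polynomials of degree two such that a₀₀ and a₁₀ are linearly independent over ℂ and a₀₀·a₁₁ = a₁₀². Then a₀₀ is the square of a homogeneous polynomial of degree one. -/

import Mathlib

open MvPolynomial

noncomputable section

namespace ConicSquareAux

/-- The substitution `Xᵢ ↦ Xᵢ · t`, recording homogeneous components as coefficients of
powers of `t`. -/
def ψ : MvPolynomial (Fin 3) ℂ →+* Polynomial (MvPolynomial (Fin 3) ℂ) :=
  MvPolynomial.eval₂Hom (Polynomial.C.comp MvPolynomial.C)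
    (fun i => Polynomial.C (MvPolynomial.X i) * Polynomial.X)

lemma ψ_monomial (d : Fin 3 →₀ ℕ) (c : ℂ) :
    ψ (monomial d c) = Polynomial.C (monomial d c) * Polynomial.X ^ d.degree := by
  simp only [ψ, eval₂Hom_monomial, RingHom.coe_comp, Function.comp_apply]
  rw [Finsupp.prod]
  simp_rw [mul_pow, ← map_pow]
  rw [Finset.prod_mul_distrib, ← map_prod, Finset.prod_pow_eq_pow_sum]
  rw [monomial_eq, Finsupp.prod, map_mul, Finsupp.degree, mul_assoc]
  rfl

lemma coeff_ψ (f : MvPolynomial (Fin 3) ℂ) (m : ℕ) :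
    (ψ f).coeff m = homogeneousComponent m f := by
  conv_lhs => rw [f.as_sum, map_sum, Polynomial.finset_sum_coeff]
  simp_rw [ψ_monomial, Polynomial.coeff_C_mul, Polynomial.coeff_X_pow]
  rw [homogeneousComponent_apply, Finset.sum_filter]
  apply Finset.sum_congr rfl
  intro d _
  rcases eq_or_ne d.degree m with h | h
  · simp [h]
  · simp [h, Ne.symm h]

lemma ψ_ne_zero {f : MvPolynomial (Fin 3) ℂ} (hf : f ≠ 0) : ψ f ≠ 0 := by
  intro h
  apply hf
  rw [← sum_homogeneousComponent f]
  apply Finset.sum_eq_zero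
  intro i _
  rw [← coeff_ψ, h, Polynomial.coeff_zero]

lemma ψ_of_isHomogeneous {f : MvPolynomial (Fin 3) ℂ} {n : ℕ} (hf : f.IsHomogeneous n) :
    ψ f = Polynomial.C f * Polynomial.X ^ n := by
  apply Polynomial.ext
  intro m
  rw [coeff_ψ, Polynomial.coeff_C_mul, Polynomial.coeff_X_pow,
    homogeneousComponent_of_mem (n := n) ((mem_homogeneousSubmodule n f).2 hf)]
  by_cases h : m = n <;> simp [h]

lemma isHomogeneous_of_components {f : MvPolynomial (Fin 3) ℂ} {a : ℕ}
    (h : ∀ m, m ≠ a → homogeneousComponent m f = 0) : f.IsHomogeneous a := by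
  rw [← mem_homogeneousSubmodule, ← sum_homogeneousComponent f]
  apply Submodule.sum_mem
  intro i _
  by_cases hi : i = a
  · subst hi; exact homogeneousComponent_mem _ _
  · rw [h i hi]; exact Submodule.zero_mem _

/-- Key lemma: over a domain, the factors of a nonzero homogeneous polynomial are homogeneous. -/
lemma isHomogeneous_of_mul {f g : MvPolynomial (Fin 3) ℂ} {n : ℕ}
    (hf : f ≠ 0) (hg : g ≠ 0) (h : (f * g).IsHomogeneous n) :
    ∃ a b : ℕ, a + b = n ∧ f.IsHomogeneous a ∧ g.IsHomogeneous b := by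
  have hfg : f * g ≠ 0 := mul_ne_zero hf hg
  have hψ : ψ f * ψ g = Polynomial.C (f * g) * Polynomial.X ^ n := by
    rw [← map_mul, ψ_of_isHomogeneous h]
  have hψf : ψ f ≠ 0 := ψ_ne_zero hf
  have hψg : ψ g ≠ 0 := ψ_ne_zero hg
  have hmono : Polynomial.C (f * g) * Polynomial.X ^ n
      = Polynomial.monomial n (f * g) := Polynomial.C_mul_X_pow_eq_monomial
  have hdeg : (ψ f).natDegree + (ψ g).natDegree = n := by
    rw [← Polynomial.natDegree_mul hψf hψg, hψ, hmono, Polynomial.natDegree_monomial,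
      if_neg hfg]
  have htdeg : (ψ f).natTrailingDegree + (ψ g).natTrailingDegree = n := by
    rw [← Polynomial.natTrailingDegree_mul hψf hψg, hψ, hmono,
      Polynomial.natTrailingDegree_monomial hfg]
  have h1 : (ψ f).natTrailingDegree ≤ (ψ f).natDegree := Polynomial.natTrailingDegree_le_natDegree _
  have h2 : (ψ g).natTrailingDegree ≤ (ψ g).natDegree := Polynomial.natTrailingDegree_le_natDegree _
  have hf' : (ψ f).natTrailingDegree = (ψ f).natDegree := by omega
  have hg' : (ψ g).natTrailingDegree = (ψ g).natDegree := by omega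
  refine ⟨(ψ f).natDegree, (ψ g).natDegree, hdeg, ?_, ?_⟩
  · apply isHomogeneous_of_components
    intro m hm
    rw [← coeff_ψ]
    rcases lt_or_gt_of_ne hm with hlt | hgt
    · exact Polynomial.coeff_eq_zero_of_lt_natTrailingDegree (by omega)
    · exact Polynomial.coeff_eq_zero_of_natDegree_lt hgt
  · apply isHomogeneous_of_components
    intro m hm
    rw [← coeff_ψ]
    rcases lt_or_gt_of_ne hm with hlt | hgt
    · exact Polynomial.coeff_eq_zero_of_lt_natTrailingDegree (by omega)
    · exact Polynomial.coeff_eq_zero_of_natDegree_lt hgt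

lemma eq_C_of_isHomogeneous_zero {q : MvPolynomial (Fin 3) ℂ} (h : q.IsHomogeneous 0) :
    q = C (coeff 0 q) := by
  have := homogeneousComponent_of_mem (m := 0) ((mem_homogeneousSubmodule 0 q).2 h)
  rw [if_pos rfl] at this
  calc q = homogeneousComponent 0 q := this.symm
    _ = C (coeff 0 q) := homogeneousComponent_zero q

end ConicSquareAux

open ConicSquareAux

/-- If `a₀₀, a₁₀, a₁₁` are complex homogeneous quadratic ternary forms with `a₀₀, a₁₀` linearly
independent and `a₀₀ · a₁₁ = a₁₀²`, then `a₀₀` is the square of a homogeneous linear form. -/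
theorem conic_is_square_of_product_eq_square
    (a00 a10 a11 : MvPolynomial (Fin 3) ℂ)
    (h00 : a00.IsHomogeneous 2) (h10 : a10.IsHomogeneous 2) (h11 : a11.IsHomogeneous 2)
    (hindep : LinearIndependent ℂ ![a00, a10])
    (heq : a00 * a11 = a10 ^ 2) :
    ∃ l : MvPolynomial (Fin 3) ℂ, l.IsHomogeneous 1 ∧ a00 = l ^ 2 := by
  have h0 : a00 ≠ 0 := by
    have := hindep.ne_zero 0
    simpa using this
  have h1 : a10 ≠ 0 := by
    have := hindep.ne_zero 1
    simpa using this
  by_cases hsf : Squarefree a00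
  · exfalso
    have hdvd : a00 ∣ a10 ^ 2 := ⟨a11, heq.symm⟩
    have hdvd' : a00 ∣ a10 := (hsf.dvd_pow_iff_dvd two_ne_zero).mp hdvd
    obtain ⟨q, hq⟩ := hdvd'
    have hqne : q ≠ 0 := by rintro rfl; simp [hq] at h1
    obtain ⟨a, b, hab, ha, hb⟩ := isHomogeneous_of_mul h0 hqne (hq ▸ h10)
    have ha2 : a = 2 := ha.inj_right h00 h0
    have hb0 : b = 0 := by omega
    subst hb0
    obtain ⟨c, hqC⟩ : ∃ c, q = C c := ⟨_, eq_C_of_isHomogeneous_zero hb⟩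
    subst hqC
    have := (LinearIndependent.pair_iff.mp hindep c (-1) ?_).2
    · exact absurd this (by norm_num)
    · rw [smul_eq_C_mul, smul_eq_C_mul, hq, map_neg, map_one]
      ring
  · rw [Squarefree] at hsf
    push_neg at hsf
    obtain ⟨x, hdvd, hxu⟩ := hsf
    obtain ⟨y, hy⟩ := hdvd
    have hx0 : x ≠ 0 := by rintro rfl; simp [hy] at h0
    have hy0 : y ≠ 0 := by rintro rfl; simp [hy] at h0
    obtain ⟨s, t, hst, hs, ht⟩ := isHomogeneous_of_mul (mul_ne_zero hx0 hx0) hy0 (hy ▸ h00)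
    obtain ⟨a, b, hab, hxa, hxb⟩ := isHomogeneous_of_mul hx0 hx0 hs
    have hba : a = b := hxa.inj_right hxb hx0
    have ha1 : a ≠ 0 := by
      rintro rfl
      apply hxu
      have hxC : x = C (coeff 0 x) := eq_C_of_isHomogeneous_zero hxa
      have hc : coeff 0 x ≠ 0 := by
        intro hc; rw [hc, map_zero] at hxC; exact hx0 hxC
      rw [hxC]
      exact (isUnit_iff_ne_zero.mpr hc).map (C : ℂ →+* MvPolynomial (Fin 3) ℂ)
    have ha : a = 1 := by omega
    have ht0 : t = 0 := by omega
    subst ht0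
    obtain ⟨c, hyC⟩ : ∃ c, y = C c := ⟨_, eq_C_of_isHomogeneous_zero ht⟩
    subst hyC
    have hc0 : c ≠ 0 := by
      intro hc; rw [hc, map_zero] at hy0; exact hy0 rfl
    obtain ⟨d, hd⟩ := IsAlgClosed.exists_pow_nat_eq (k := ℂ) c two_pos
    refine ⟨C d * x, ?_, ?_⟩
    · have := (isHomogeneous_C (Fin 3) d).mul (ha ▸ hxa)
      simpa using this
    · rw [hy, mul_pow, ← map_pow, hd]
      ring
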